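/- Let k ≥ 2 be an integer and let d = k if k is even and d = k − 1 if k is odd. Then for every real α with 0 < α < d/k, there exists a unique positive real x_0 satisfying α·[(1 + x_0)^k + (1 − x_0)^k] = x_0·[(1 + x_0)^{k−1} − (1 − x_0)^{k−1}]. -/

import Mathlib

open Finset Set

private def gam (k : ℕ) (α : ℝ) (j : ℕ) : ℝ :=
  (1 + (-1:ℝ)^j) * (Nat.choose k j) * ((k:ℝ)*α - j)

private lemma gam_factor_nonneg (j : ℕ) : (0:ℝ) ≤ 1 + (-1:ℝ)^j := by
  rcases Nat.even_or_odd j with h | h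
  · rw [h.neg_one_pow]; norm_num
  · rw [h.neg_one_pow]; norm_num

private lemma key_identity (k : ℕ) (hk : 1 ≤ k) (α x : ℝ) :
    (k:ℝ) * (α * ((1+x)^k + (1-x)^k) - x * ((1+x)^(k-1) - (1-x)^(k-1)))
      = ∑ j ∈ range (k+1), gam k α j * x^j := by
  obtain ⟨m, rfl⟩ : ∃ m, k = m + 1 := ⟨k-1, (Nat.succ_pred_eq_of_pos hk).symm⟩
  have hsub : m + 1 - 1 = m := rfl
  have h1 : (1+x)^(m+1) = ∑ j ∈ range (m+2), x^j * (Nat.choose (m+1) j : ℝ) := by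
    rw [add_comm, add_pow]; simp
  have h2 : (1-x)^(m+1) = ∑ j ∈ range (m+2), (-x)^j * (Nat.choose (m+1) j : ℝ) := by
    have e : (1:ℝ) - x = -x + 1 := by ring
    rw [e, add_pow]; simp
  have h3 : (1+x)^m = ∑ j ∈ range (m+1), x^j * (Nat.choose m j : ℝ) := by
    rw [add_comm, add_pow]; simp
  have h4 : (1-x)^m = ∑ j ∈ range (m+1), (-x)^j * (Nat.choose m j : ℝ) := by
    have e : (1:ℝ) - x = -x + 1 := by ring
    rw [e, add_pow]; simp
  rw [hsub, h1, h2, h3, h4]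
  rw [Finset.sum_range_succ' (fun j => gam (m+1) α j * x^j) (m+1)]
  rw [Finset.sum_range_succ' (fun j => x^j * (Nat.choose (m+1) j : ℝ)) (m+1)]
  rw [Finset.sum_range_succ' (fun j => (-x)^j * (Nat.choose (m+1) j : ℝ)) (m+1)]
  have key : ∀ j ∈ range (m+1),
      ((m:ℝ)+1) * (α * (x^(j+1) * (Nat.choose (m+1) (j+1) : ℝ)
          + (-x)^(j+1) * (Nat.choose (m+1) (j+1) : ℝ)))
        - ((m:ℝ)+1) * (x * ((x^j * (Nat.choose m j : ℝ)) - (-x)^j * (Nat.choose m j : ℝ)))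
      = gam (m+1) α (j+1) * x^(j+1) := by
    intro j _
    have hc : ((m:ℝ)+1) * (Nat.choose m j : ℝ) = ((j:ℝ)+1) * (Nat.choose (m+1) (j+1) : ℝ) := by
      have h := congrArg (fun n : ℕ => (n:ℝ)) (Nat.add_one_mul_choose_eq m j)
      push_cast at h
      linarith [h]
    have hnx : (-x)^j = (-1:ℝ)^j * x^j := by rw [neg_pow]
    have hnx1 : (-x)^(j+1) = -((-1:ℝ)^j * x^(j+1)) := by
      rw [neg_pow, pow_succ]; ring
    have hp1 : ((-1:ℝ))^(j+1) = (-1:ℝ)^j * (-1) := by rw [pow_succ]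
    rw [gam, hnx, hnx1, hp1]
    push_cast
    linear_combination ((-1:ℝ)^j - 1) * x^(j+1) * hc
  have hsum := Finset.sum_congr rfl key
  simp only [mul_add, mul_sub, Finset.sum_sub_distrib, Finset.sum_add_distrib,
    ← Finset.mul_sum] at hsum
  have g0 : gam (m+1) α 0 = 2*(((m:ℝ)+1)*α) := by rw [gam]; norm_num [Nat.choose_zero_right]
  rw [g0]
  simp only [Nat.choose_zero_right, Nat.cast_one, pow_zero, mul_one, one_mul]
  push_cast
  linarith [hsum]

/-- Let `k ≥ 2` and `d = k` if `k` is even, `d = k - 1` if `k` is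
odd.  For every real `α` with `0 < α < d/k`, there is a unique positive real
`x₀` with `α [(1+x₀)^k + (1-x₀)^k] = x₀ [(1+x₀)^{k-1} - (1-x₀)^{k-1}]`. -/
theorem stmt_9 (k : ℕ) (hk : 2 ≤ k) (d : ℕ)
    (hd : d = if Even k then k else k - 1)
    (α : ℝ) (h0 : 0 < α) (h1 : α < (d : ℝ) / (k : ℝ)) :
    ∃! x0 : ℝ, 0 < x0 ∧
      α * ((1 + x0) ^ k + (1 - x0) ^ k) =
        x0 * ((1 + x0) ^ (k - 1) - (1 - x0) ^ (k - 1)) := by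
  have hk1 : 1 ≤ k := by omega
  have hkR : (0:ℝ) < (k:ℝ) := by exact_mod_cast Nat.cast_pos.mpr (show 0 < k by omega)
  -- facts about d
  have hdfacts : 2 ≤ d ∧ d ≤ k ∧ Even d ∧ ∀ j, d < j → j ≤ k → gam k α j = 0 := by
    rcases Nat.even_or_odd k with hke | hko
    · rw [hd, if_pos hke]
      exact ⟨hk, le_refl k, hke, fun j hj1 hj2 => absurd hj2 (not_le.mpr hj1)⟩
    · have hne : ¬ Even k := Nat.not_even_iff_odd.mpr hko
      have hk3 : 3 ≤ k := by
        rcases hko with ⟨t, ht⟩; omega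
      rw [hd, if_neg hne]
      refine ⟨by omega, by omega, Nat.Odd.sub_odd hko odd_one, ?_⟩
      intro j hj1 hj2
      have hjk : j = k := by omega
      subst hjk
      rw [gam, hko.neg_one_pow]
      ring
  obtain ⟨hd2, hdk, hdeven, hgamhigh⟩ := hdfacts
  set a0 : ℝ := (k:ℝ)*α with ha0def
  have ha0 : 0 < a0 := by positivity
  have hda : a0 < (d:ℝ) := by
    have := (lt_div_iff₀ hkR).mp h1
    rw [ha0def]; linarith
  have hC : (0:ℝ) < (Nat.choose k d : ℝ) := by exact_mod_cast Nat.choose_pos hdk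
  have hgamd : gam k α d < 0 := by
    rw [gam, hdeven.neg_one_pow]
    have h2 : (k:ℝ)*α - (d:ℝ) < 0 := by rw [← ha0def]; linarith
    nlinarith
  set P : ℝ → ℝ := fun x => α * ((1+x)^k + (1-x)^k) - x * ((1+x)^(k-1) - (1-x)^(k-1))
    with hPdef
  have hkey : ∀ x : ℝ, (k:ℝ) * P x = ∑ j ∈ range (k+1), gam k α j * x^j := by
    intro x
    exact key_identity k hk1 α x
  have hrestrict : ∀ x : ℝ,
      ∑ j ∈ range (k+1), gam k α j * x^j = ∑ j ∈ range (d+1), gam k α j * x^j := by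
    intro x
    symm
    apply Finset.sum_subset
    · exact Finset.range_subset_range.mpr (by omega)
    · intro j hj hjn
      rw [Finset.mem_range] at hj hjn
      rw [hgamhigh j (by omega) (by omega), zero_mul]
  -- existence point X where P < 0
  set M : ℝ := ∑ j ∈ range d, |gam k α j| with hMdef
  have hM0 : 0 ≤ M := Finset.sum_nonneg (fun j _ => abs_nonneg _)
  set X : ℝ := max 1 ((M+1)/(-gam k α d)) with hXdef
  have hX1 : (1:ℝ) ≤ X := le_max_left _ _
  have hX0 : (0:ℝ) < X := lt_of_lt_of_le one_pos hX1
  have hgdX : gam k α d * X ≤ -(M+1) := by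
    have h2 : (M+1)/(-gam k α d) ≤ X := le_max_right _ _
    have hg : 0 < -gam k α d := neg_pos.mpr hgamd
    have h3 := (div_le_iff₀ hg).mp h2
    nlinarith
  have hPX : P X < 0 := by
    have hkP : (k:ℝ) * P X = ∑ j ∈ range (d+1), gam k α j * X^j := by
      rw [hkey X, hrestrict X]
    have hsplit : ∑ j ∈ range (d+1), gam k α j * X^j
        = (∑ j ∈ range d, gam k α j * X^j) + gam k α d * X^d :=
      Finset.sum_range_succ _ d
    have hbound : ∀ j ∈ range d, gam k α j * X^j ≤ |gam k α j| * X^(d-1) := by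
      intro j hj
      rw [Finset.mem_range] at hj
      have h1 : gam k α j * X^j ≤ |gam k α j| * X^j :=
        mul_le_mul_of_nonneg_right (le_abs_self _) (pow_nonneg hX0.le _)
      have h2 : X^j ≤ X^(d-1) := pow_le_pow_right₀ hX1 (by omega)
      have h3 : |gam k α j| * X^j ≤ |gam k α j| * X^(d-1) :=
        mul_le_mul_of_nonneg_left h2 (abs_nonneg _)
      linarith
    have hsum_le : ∑ j ∈ range d, gam k α j * X^j ≤ M * X^(d-1) := by
      calc ∑ j ∈ range d, gam k α j * X^j ≤ ∑ j ∈ range d, |gam k α j| * X^(d-1) :=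
            Finset.sum_le_sum hbound
        _ = M * X^(d-1) := by rw [hMdef, Finset.sum_mul]
    have hXd : X^d = X * X^(d-1) := by
      conv_lhs => rw [show d = 1 + (d-1) by omega]
      rw [pow_add, pow_one]
    have hXpow : (0:ℝ) < X^(d-1) := pow_pos hX0 _
    have hlast : gam k α d * X^d ≤ -(M+1) * X^(d-1) := by
      rw [hXd, ← mul_assoc]
      exact mul_le_mul_of_nonneg_right hgdX (pow_nonneg hX0.le _)
    have hfin : (k:ℝ) * P X ≤ -X^(d-1) := by
      rw [hkP, hsplit]; nlinarith
    nlinarith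
  have hP0 : P 0 = α*2 := by rw [hPdef]; norm_num
  have hcont : Continuous P := by rw [hPdef]; fun_prop
  obtain ⟨x0, hx0mem, hx0⟩ : ∃ x0 ∈ Ioo (0:ℝ) X, P x0 = 0 := by
    have hsub := intermediate_value_Ioo' hX0.le hcont.continuousOn
    have h0mem : (0:ℝ) ∈ Ioo (P X) (P 0) := ⟨hPX, by rw [hP0]; positivity⟩
    obtain ⟨y, hymem, hy⟩ := hsub h0mem
    exact ⟨y, hymem, hy⟩
  -- the strictly decreasing auxiliary function S
  set S : ℝ → ℝ := fun x => ∑ j ∈ range (k+1), gam k α j * x ^ ((j:ℝ) - a0) with hSdef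
  have hSderiv : ∀ x : ℝ, 0 < x → HasDerivAt S
      (∑ j ∈ range (k+1), gam k α j * (((j:ℝ) - a0) * x ^ ((j:ℝ) - a0 - 1))) x := by
    intro x hx
    rw [hSdef]
    apply HasDerivAt.fun_sum
    intro j _
    exact (Real.hasDerivAt_rpow_const (Or.inl hx.ne')).const_mul _
  have hneg : ∀ x : ℝ, 0 < x →
      (∑ j ∈ range (k+1), gam k α j * (((j:ℝ) - a0) * x ^ ((j:ℝ) - a0 - 1))) < 0 := by
    intro x hx
    have hle : ∀ j ∈ range (k+1),
        gam k α j * (((j:ℝ) - a0) * x ^ ((j:ℝ) - a0 - 1)) ≤ (fun _ : ℕ => (0:ℝ)) j := by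
      intro j _
      have h1 : 0 ≤ 1 + (-1:ℝ)^j := gam_factor_nonneg j
      have h2 : (0:ℝ) ≤ (Nat.choose k j : ℝ) := Nat.cast_nonneg _
      have h3 : (0:ℝ) < x ^ ((j:ℝ) - a0 - 1) := Real.rpow_pos_of_pos hx _
      have hid : gam k α j * (((j:ℝ) - a0) * x ^ ((j:ℝ) - a0 - 1))
          = -(((1 + (-1:ℝ)^j) * (Nat.choose k j : ℝ)) * ((a0 - (j:ℝ))^2
              * x ^ ((j:ℝ) - a0 - 1))) := by
        rw [gam, ha0def]; ring
      rw [hid]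
      simp only
      have : 0 ≤ ((1 + (-1:ℝ)^j) * (Nat.choose k j : ℝ)) * ((a0 - (j:ℝ))^2
          * x ^ ((j:ℝ) - a0 - 1)) := by positivity
      linarith
    have hstrict : gam k α 0 * ((((0:ℕ):ℝ) - a0) * x ^ ((((0:ℕ):ℝ)) - a0 - 1))
        < (fun _ : ℕ => (0:ℝ)) 0 := by
      have g0 : gam k α 0 = 2*a0 := by rw [gam, ha0def]; norm_num
      have h3 : (0:ℝ) < x ^ ((0:ℝ) - a0 - 1) := Real.rpow_pos_of_pos hx _
      rw [g0]
      simp only [Nat.cast_zero]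
      nlinarith [mul_pos (mul_pos ha0 ha0) h3]
    calc (∑ j ∈ range (k+1), gam k α j * (((j:ℝ) - a0) * x ^ ((j:ℝ) - a0 - 1)))
        < ∑ _j ∈ range (k+1), (0:ℝ) :=
          Finset.sum_lt_sum hle ⟨0, Finset.mem_range.mpr (by omega), hstrict⟩
      _ = 0 := Finset.sum_const_zero
  have hanti : StrictAntiOn S (Ioi (0:ℝ)) := by
    apply strictAntiOn_of_deriv_neg (convex_Ioi 0)
    · intro x hx
      exact ((hSderiv x hx).continuousAt).continuousWithinAt
    · intro x hx
      rw [interior_Ioi] at hx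
      rw [(hSderiv x hx).deriv]
      exact hneg x hx
  have hSP : ∀ x : ℝ, 0 < x → S x = ((k:ℝ) * P x) * x ^ (-a0 : ℝ) := by
    intro x hx
    rw [hSdef]
    simp only
    calc (∑ j ∈ range (k+1), gam k α j * x ^ ((j:ℝ) - a0))
        = ∑ j ∈ range (k+1), (gam k α j * x^j) * x ^ (-a0:ℝ) := by
          apply Finset.sum_congr rfl
          intro j _
          have h : x ^ ((j:ℝ) - a0) = x ^ (j:ℝ) * x ^ (-a0:ℝ) := by
            rw [← Real.rpow_add hx]; ring_nf
          rw [h, Real.rpow_natCast]; ring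
      _ = (∑ j ∈ range (k+1), gam k α j * x^j) * x ^ (-a0:ℝ) := by
          rw [Finset.sum_mul]
      _ = ((k:ℝ) * P x) * x ^ (-a0:ℝ) := by rw [hkey x]
  -- conclusion
  refine ⟨x0, ⟨hx0mem.1, ?_⟩, ?_⟩
  · have h := hx0
    rw [hPdef] at h
    simp only at h
    linarith
  · rintro y ⟨hy0, hyeq⟩
    have hPy : P y = 0 := by
      rw [hPdef]; simp only; linarith
    have hSy : S y = 0 := by rw [hSP y hy0, hPy]; ring
    have hSx0 : S x0 = 0 := by rw [hSP x0 hx0mem.1, hx0]; ring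
    exact hanti.injOn (mem_Ioi.mpr hy0) (mem_Ioi.mpr hx0mem.1) (hSy.trans hSx0.symm)
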